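/- arXiv:2411.08941 — 3 statements merged into one kernel-verified Lean document; each statement's English description precedes it below -/
import Mathlib

section
/- Let f : ℂ → ℂ be ℝ-differentiable at z₀ with Wirtinger derivatives fz and fz̄ at z₀ satisfying |fz| > |fz̄|, and set μ = fz̄/fz. Then, writing u = Re f and v = Im f, the gradients at z₀ satisfy ∇v = B^μ ∇u, where B^μ = (1/(1-|μ|²))·[[2 Im μ, -|1+μ|²],[|1-μ|², -2 Im μ]]. -/
open Complex

/-- If `f` is ℝ-differentiable at `z₀` with Wirtinger derivatives `fz, fz̄` satisfying
`|fz| > |fz̄|`, and `μ = fz̄/fz`, then the gradients of `u = Re f`, `v = Im f` at `z₀`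
satisfy `∇v = B^μ ∇u`. -/
theorem grad_v_eq_Bmu_grad_u (f : ℂ → ℂ) (z₀ : ℂ) (L : ℂ →L[ℝ] ℂ)
    (hf : HasFDerivAt f L z₀)
    (fz fzb : ℂ)
    (hfz : fz = (L 1 - Complex.I * L Complex.I) / 2)
    (hfzb : fzb = (L 1 + Complex.I * L Complex.I) / 2)
    (h : ‖fzb‖ < ‖fz‖)
    (μ : ℂ) (hμ : μ = fzb / fz) :
    ![(L 1).im, (L Complex.I).im] =
      Matrix.mulVec
        !![2 * μ.im / (1 - ‖μ‖ ^ 2),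
            -(‖1 + μ‖) ^ 2 / (1 - ‖μ‖ ^ 2);
           (‖1 - μ‖) ^ 2 / (1 - ‖μ‖ ^ 2),
            -(2 * μ.im) / (1 - ‖μ‖ ^ 2)]
        ![(L 1).re, (L Complex.I).re] := by
  have hfz0 : fz ≠ 0 := by
    intro h0
    rw [h0, norm_zero] at h
    exact absurd h (not_lt.mpr (norm_nonneg _))
  have hNpos : 0 < fz.re ^ 2 + fz.im ^ 2 := by
    have := Complex.normSq_pos.mpr hfz0
    rw [Complex.normSq_apply] at this
    nlinarith
  have hN : fz.re ^ 2 + fz.im ^ 2 ≠ 0 := hNpos.ne'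
  have hNlt : fzb.re ^ 2 + fzb.im ^ 2 < fz.re ^ 2 + fz.im ^ 2 := by
    have h2 : Complex.normSq fzb < Complex.normSq fz := by
      rw [← Complex.sq_norm, ← Complex.sq_norm]
      exact pow_lt_pow_left₀ h (norm_nonneg _) (by norm_num)
    rw [Complex.normSq_apply, Complex.normSq_apply] at h2
    nlinarith
  have hD : (fz.re ^ 2 + fz.im ^ 2) - (fzb.re ^ 2 + fzb.im ^ 2) ≠ 0 := by
    have : 0 < (fz.re ^ 2 + fz.im ^ 2) - (fzb.re ^ 2 + fzb.im ^ 2) := by linarith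
    exact this.ne'
  have ha : (L 1 : ℂ) = fz + fzb := by rw [hfz, hfzb]; ring
  have hb : (L Complex.I : ℂ) = Complex.I * (fz - fzb) := by
    rw [hfz, hfzb]
    linear_combination (L Complex.I) * Complex.I_mul_I
  have hμim : μ.im = (fzb.im * fz.re - fzb.re * fz.im) / (fz.re ^ 2 + fz.im ^ 2) := by
    rw [hμ, Complex.div_im, Complex.normSq_apply]; ring_nf
  have habs : ‖μ‖ ^ 2 = (fzb.re ^ 2 + fzb.im ^ 2) / (fz.re ^ 2 + fz.im ^ 2) := by
    rw [hμ, norm_div, div_pow, Complex.sq_norm, Complex.sq_norm,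
      Complex.normSq_apply, Complex.normSq_apply]; ring_nf
  have h1p : ‖1 + μ‖ ^ 2
      = ((fz.re + fzb.re) ^ 2 + (fz.im + fzb.im) ^ 2) / (fz.re ^ 2 + fz.im ^ 2) := by
    have e : 1 + μ = (fz + fzb) / fz := by rw [hμ]; field_simp
    rw [e, norm_div, div_pow, Complex.sq_norm, Complex.sq_norm,
      Complex.normSq_apply, Complex.normSq_apply, Complex.add_re, Complex.add_im]
    ring_nf
  have h1m : ‖1 - μ‖ ^ 2
      = ((fz.re - fzb.re) ^ 2 + (fz.im - fzb.im) ^ 2) / (fz.re ^ 2 + fz.im ^ 2) := by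
    have e : 1 - μ = (fz - fzb) / fz := by rw [hμ]; field_simp
    rw [e, norm_div, div_pow, Complex.sq_norm, Complex.sq_norm,
      Complex.normSq_apply, Complex.normSq_apply, Complex.sub_re, Complex.sub_im]
    ring_nf
  have hden : 1 - ‖μ‖ ^ 2
      = ((fz.re ^ 2 + fz.im ^ 2) - (fzb.re ^ 2 + fzb.im ^ 2)) / (fz.re ^ 2 + fz.im ^ 2) := by
    rw [habs]; field_simp
  funext i
  fin_cases i <;>
  · simp [Matrix.mulVec, dotProduct, Fin.sum_univ_two, ha, hb,
      hμim, habs, h1p, h1m, hden, Complex.add_re, Complex.add_im,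
      Complex.mul_re, Complex.mul_im, Complex.sub_re, Complex.sub_im,
      Complex.I_re, Complex.I_im, div_div_div_cancel_right₀]
    field_simp
    ring
end

section
/- Let B be a real 2×2 matrix with det B = 1, b₂₂ = -b₁₁, b₁₂ < 0 and b₂₁ > 0, and set μ = μ_B = (b₁₂ + b₂₁ - 2i b₁₁)/(b₁₂ - b₂₁ - 2). Then the matrix B^μ = (1/(1-|μ|²))·[[2 Im μ, -|1+μ|²],[|1-μ|², -2 Im μ]] equals B. -/
/-- If `det B = 1`, `b₂₂ = -b₁₁`, `b₁₂ < 0`, `b₂₁ > 0`, and `μ = μ_B`,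
then `B^μ = B`. -/
theorem Bmu_of_muB_eq (b11 b12 b21 b22 : ℝ)
    (hdet : b11 * b22 - b12 * b21 = 1) (hb22 : b22 = -b11)
    (hb12 : b12 < 0) (hb21 : b21 > 0)
    (μ : ℂ) (hμ : μ = (↑b12 + ↑b21 - 2 * Complex.I * ↑b11) / (↑b12 - ↑b21 - 2)) :
    !![2 * μ.im / (1 - ‖μ‖ ^ 2),
        -(‖1 + μ‖) ^ 2 / (1 - ‖μ‖ ^ 2);
       (‖1 - μ‖) ^ 2 / (1 - ‖μ‖ ^ 2),
        -(2 * μ.im) / (1 - ‖μ‖ ^ 2)] = !![b11, b12; b21, b22] := by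
  subst hb22
  have key : b11 * b11 + b12 * b21 = -1 := by nlinarith [hdet]
  have hd : b12 - b21 - 2 < 0 := by linarith
  have hd0 : b12 - b21 - 2 ≠ 0 := ne_of_lt hd
  have hre : μ.re = (b12 + b21) / (b12 - b21 - 2) := by
    subst hμ
    simp [Complex.div_re, Complex.normSq_apply]
    field_simp
  have him : μ.im = (-2 * b11) / (b12 - b21 - 2) := by
    subst hμ
    simp [Complex.div_im, Complex.normSq_apply]
    field_simp
  have habs : 1 - ‖μ‖ ^ 2 = -4 / (b12 - b21 - 2) := by
    rw [Complex.sq_norm, Complex.normSq_apply, hre, him]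
    field_simp
    ring_nf
    nlinarith [key]
  have habs1 : ‖1 + μ‖ ^ 2 = 4 * b12 / (b12 - b21 - 2) := by
    rw [Complex.sq_norm, Complex.normSq_apply]
    simp [hre, him]
    field_simp
    ring_nf
    nlinarith [key]
  have habs2 : ‖1 - μ‖ ^ 2 = -4 * b21 / (b12 - b21 - 2) := by
    rw [Complex.sq_norm, Complex.normSq_apply]
    simp [hre, him]
    field_simp
    ring_nf
    nlinarith [key]
  rw [habs, habs1, habs2, him]
  ext i j
  fin_cases i <;> fin_cases j <;> simp <;> field_simp <;> ring
end

section
/- Let D ⊆ ℝ² be open, u, v : D → ℝ have partial derivatives at a point Z₀ ∈ D, and suppose ∇v(Z₀) = B ∇u(Z₀) for a matrix B with det B = 1, b₂₂ = -b₁₁, b₁₂ < 0, b₂₁ > 0. Assume ∇u(Z₀) ≠ 0. Then the function f = u + iv satisfies the Beltrami relation fz̄ = μ_B · fz at Z₀, where μ_B = (b₁₂ + b₂₁ - 2i b₁₁)/(b₁₂ - b₂₁ - 2). -/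
/-- If `u, v` have partial derivatives at `Z₀ ∈ D` with `∇v(Z₀) = B ∇u(Z₀)`,
where `det B = 1`, `b₂₂ = -b₁₁`, `b₁₂ < 0`, `b₂₁ > 0`, and `∇u(Z₀) ≠ 0`,
then `f = u + iv` satisfies the Beltrami relation `fz̄ = μ_B · fz` at `Z₀`. -/
theorem beltrami_of_generalized_CR (D : Set (ℝ × ℝ)) (hD : IsOpen D)
    (Z₀ : ℝ × ℝ) (hZ₀ : Z₀ ∈ D)
    (u v : ℝ × ℝ → ℝ) (ux uy vx vy : ℝ)
    (hux : HasDerivAt (fun t => u (t, Z₀.2)) ux Z₀.1)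
    (huy : HasDerivAt (fun t => u (Z₀.1, t)) uy Z₀.2)
    (hvx : HasDerivAt (fun t => v (t, Z₀.2)) vx Z₀.1)
    (hvy : HasDerivAt (fun t => v (Z₀.1, t)) vy Z₀.2)
    (b11 b12 b21 b22 : ℝ)
    (hdet : b11 * b22 - b12 * b21 = 1) (hb22 : b22 = -b11)
    (hb12 : b12 < 0) (hb21 : b21 > 0)
    (hCR1 : vx = b11 * ux + b12 * uy)
    (hCR2 : vy = b21 * ux + b22 * uy)
    (hgrad : (ux, uy) ≠ (0, 0)) :
    ((↑ux + ↑vx * Complex.I) + Complex.I * (↑uy + ↑vy * Complex.I)) / 2 =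
      ((↑b12 + ↑b21 - 2 * Complex.I * ↑b11) / (↑b12 - ↑b21 - 2)) *
        (((↑ux + ↑vx * Complex.I) - Complex.I * (↑uy + ↑vy * Complex.I)) / 2) := by
  have hden : (b12 : ℝ) - b21 - 2 < 0 := by linarith
  have hdenC : ((b12 : ℂ) - b21 - 2) ≠ 0 := by
    have : ((b12 - b21 - 2 : ℝ) : ℂ) ≠ 0 := by exact_mod_cast hden.ne
    simpa using this
  subst hCR1 hCR2 hb22
  have hdet' : b11 * (-b11) - b12 * b21 = 1 := hdet
  have key : ((↑ux + ↑(b11*ux+b12*uy) * Complex.I) +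
        Complex.I * (↑uy + ↑(b21*ux+(-b11)*uy) * Complex.I)) * ((b12:ℂ) - b21 - 2) =
      ((↑b12 + ↑b21 - 2 * Complex.I * ↑b11) *
        ((↑ux + ↑(b11*ux+b12*uy) * Complex.I) -
          Complex.I * (↑uy + ↑(b21*ux+(-b11)*uy) * Complex.I))) := by
    rw [Complex.ext_iff]
    constructor
    · simp; ring_nf; linear_combination (2*ux) * hdet'
    · simp; ring_nf; linear_combination (2*uy) * hdet'
  rw [div_mul_div_comm, div_eq_div_iff two_ne_zero (mul_ne_zero hdenC two_ne_zero)]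
  linear_combination 2 * key
end
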